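/- Let w₁,...,wₙ, d be positive integers and let f₀ be quasihomogeneous of degree d. Suppose b₁,...,bₙ are quasihomogeneous polynomials with deg bᵢ = wᵢ (or bᵢ = 0), and suppose the partial derivatives ∂f₀/∂x₁,...,∂f₀/∂xₙ form a regular sequence in ℂ[x₁,...,xₙ]. If 2wᵢ < d for all i, i.e. d − wⱼ > wᵢ for all i,j, and Σᵢ bᵢ·∂f₀/∂xᵢ = 0, then bᵢ = 0 for all i. -/

import Mathlib

open MvPolynomial

lemma aux_span_deg_vanish {n k : ℕ} (w : Fin n → ℕ) (m : ℕ)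
    (r : Fin k → MvPolynomial (Fin n) ℂ)
    (hr : ∀ j, ∀ γ ∈ (r j).support, m < ∑ t, w t * γ t)
    (p : MvPolynomial (Fin n) ℂ)
    (hp : ∀ α ∈ p.support, ∑ t, w t * α t ≤ m)
    (hmem : p ∈ Ideal.span (Set.range r)) : p = 0 := by
  obtain ⟨c, hc⟩ := (Submodule.mem_span_range_iff_exists_fun _).mp hmem
  ext α
  rw [coeff_zero]
  by_contra h
  have hm := hp α (mem_support_iff.mpr h)
  apply h
  rw [← hc, coeff_sum]
  refine Finset.sum_eq_zero fun j _ => ?_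
  rw [smul_eq_mul, coeff_mul]
  refine Finset.sum_eq_zero fun x hx => ?_
  rw [Finset.HasAntidiagonal.mem_antidiagonal] at hx
  have hz : coeff x.2 (r j) = 0 := by
    by_contra hz
    have h1 := hr j x.2 (mem_support_iff.mpr hz)
    have h2 : (∑ t, w t * x.2 t) ≤ ∑ t, w t * α t := by
      refine Finset.sum_le_sum fun t _ => ?_
      refine Nat.mul_le_mul_left _ ?_
      have : α t = x.1 t + x.2 t := by rw [← hx]; rfl
      omega
    omega
  rw [hz, mul_zero]

lemma aux_reg_rel_vanish {n : ℕ} (w : Fin n → ℕ) :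
    ∀ (k : ℕ) (r b : Fin k → MvPolynomial (Fin n) ℂ) (e : Fin k → ℕ),
    RingTheory.Sequence.IsWeaklyRegular (MvPolynomial (Fin n) ℂ) (List.ofFn r) →
    (∀ i j, ∀ γ ∈ (r j).support, e i < ∑ t, w t * γ t) →
    (∀ i, ∀ α ∈ (b i).support, ∑ t, w t * α t ≤ e i) →
    (∑ i, b i * r i = 0) → ∀ i, b i = 0 := by
  intro k
  induction k with
  | zero => exact fun _ _ _ _ _ _ _ i => i.elim0
  | succ k ih =>
    intro r b e hreg hr hb hrel
    rw [List.ofFn_succ', List.concat_eq_append,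
      RingTheory.Sequence.isWeaklyRegular_append_iff] at hreg
    obtain ⟨hpre, hlast⟩ := hreg
    rw [RingTheory.Sequence.isWeaklyRegular_singleton_iff] at hlast
    set I : Ideal (MvPolynomial (Fin n) ℂ) :=
      Ideal.span (Set.range fun i : Fin k => r i.castSucc) with hI
    have hofList : Ideal.ofList (List.ofFn fun i : Fin k => r i.castSucc) = I := by
      rw [hI]
      apply congrArg Ideal.span
      ext x
      simp [List.mem_ofFn]
    have hIeq : (Ideal.ofList (List.ofFn fun i : Fin k => r i.castSucc) •
        (⊤ : Submodule (MvPolynomial (Fin n) ℂ) (MvPolynomial (Fin n) ℂ))) =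
        (I : Submodule (MvPolynomial (Fin n) ℂ) (MvPolynomial (Fin n) ℂ)) := by
      rw [hofList, ← Ideal.span_eq I, Submodule.span_smul_eq,
        Submodule.set_smul_top_eq_span, Ideal.span_eq]
    have hmem : b (Fin.last k) * r (Fin.last k) ∈ I := by
      have heq : b (Fin.last k) * r (Fin.last k) =
          -∑ i : Fin k, b i.castSucc * r i.castSucc := by
        rw [Fin.sum_univ_castSucc] at hrel
        linear_combination hrel
      rw [heq]
      refine neg_mem (Ideal.sum_mem _ fun i _ => Ideal.mul_mem_left _ _ ?_)
      exact Ideal.subset_span ⟨i, rfl⟩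
    have hbl : b (Fin.last k) ∈ I := by
      have h0 : r (Fin.last k) • (Submodule.Quotient.mk (b (Fin.last k)) :
          MvPolynomial (Fin n) ℂ ⧸ (Ideal.ofList (List.ofFn fun i : Fin k => r i.castSucc) •
            (⊤ : Submodule (MvPolynomial (Fin n) ℂ) (MvPolynomial (Fin n) ℂ)))) =
          r (Fin.last k) • 0 := by
        rw [smul_zero, ← Submodule.Quotient.mk_smul, Submodule.Quotient.mk_eq_zero, hIeq,
          smul_eq_mul, mul_comm]
        exact hmem
      have h1 := hlast h0
      rwa [Submodule.Quotient.mk_eq_zero, hIeq] at h1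
    have hbl0 : b (Fin.last k) = 0 :=
      aux_span_deg_vanish w (e (Fin.last k)) _
        (fun j => hr (Fin.last k) j.castSucc) _ (hb (Fin.last k)) hbl
    have hrel' : ∑ i : Fin k, b i.castSucc * r i.castSucc = 0 := by
      rw [Fin.sum_univ_castSucc, hbl0, zero_mul, add_zero] at hrel
      exact hrel
    have hrest := ih (fun i => r i.castSucc) (fun i => b i.castSucc)
      (fun i => e i.castSucc) hpre
      (fun i j => hr i.castSucc j.castSucc) (fun i => hb i.castSucc) hrel'
    exact fun i => Fin.lastCases hbl0 hrest i

/-- If `f₀` is quasihomogeneous of degree `d` with `2wᵢ < d` for all `i`, the partials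
form a regular sequence, and `bᵢ` are quasihomogeneous of degree `wᵢ` (or zero) with
`Σ bᵢ ∂f₀/∂xᵢ = 0`, then all `bᵢ = 0`. -/
theorem relation_coefficients_vanish (n : ℕ) (w : Fin n → ℕ) (d : ℕ)
    (hw : ∀ i, 0 < w i) (hd : 0 < d)
    (f₀ : MvPolynomial (Fin n) ℂ)
    (hqh : ∀ α ∈ f₀.support, ∑ i, w i * α i = d)
    (hreg : RingTheory.Sequence.IsRegular (MvPolynomial (Fin n) ℂ)
      (List.ofFn fun i => pderiv i f₀))
    (hwd : ∀ i, 2 * w i < d)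
    (b : Fin n → MvPolynomial (Fin n) ℂ)
    (hb : ∀ i, ∀ α ∈ (b i).support, ∑ j, w j * α j = w i)
    (hrel : ∑ i, b i * pderiv i f₀ = 0) :
    ∀ i, b i = 0 := by
  refine aux_reg_rel_vanish w n (fun i => pderiv i f₀) b w hreg.toIsWeaklyRegular
    ?_ (fun i α hα => le_of_eq (hb i α hα)) hrel
  intro i j γ hγ
  have hγ' : ∃ α ∈ f₀.support, α - Finsupp.single j 1 = γ ∧ α j ≠ 0 := by
    have hpd : pderiv j f₀ = ∑ α ∈ f₀.support,
        monomial (α - Finsupp.single j 1) (coeff α f₀ * (α j : ℂ)) := by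
      conv_lhs => rw [← f₀.support_sum_monomial_coeff]
      rw [map_sum]
      simp [pderiv_monomial]
    have hγ2 : coeff γ (pderiv j f₀) ≠ 0 := mem_support_iff.mp hγ
    rw [hpd, coeff_sum] at hγ2
    obtain ⟨α, hαs, hαne⟩ := Finset.exists_ne_zero_of_sum_ne_zero hγ2
    rw [coeff_monomial] at hαne
    by_cases hcase : α - Finsupp.single j 1 = γ
    · refine ⟨α, hαs, hcase, ?_⟩
      rw [if_pos hcase] at hαne
      intro h0
      simp [h0] at hαne
    · rw [if_neg hcase] at hαne
      exact absurd rfl hαne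
  obtain ⟨α, hαs, rfl, hαj⟩ := hγ'
  have hsingle : ∑ t, w t * (Finsupp.single j 1 : Fin n →₀ ℕ) t = w j := by
    simp [Finsupp.single_apply, mul_ite, Finset.sum_ite_eq]
  have key : (∑ t, w t * ((α - Finsupp.single j 1 : Fin n →₀ ℕ)) t) + w j = d := by
    rw [← hqh α hαs, ← hsingle, ← Finset.sum_add_distrib]
    refine Finset.sum_congr rfl fun t _ => ?_
    rw [← mul_add]
    congr 1
    rcases eq_or_ne j t with rfl | hne
    · simp [Finsupp.tsub_apply, Finsupp.single_apply]
      omega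
    · simp only [Finsupp.tsub_apply, Finsupp.single_apply, if_neg hne]
      omega
  have h1 := hwd i
  have h2 := hwd j
  omega
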